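/- arXiv:2503.08171 — 7 statements merged into one kernel-verified Lean document; each statement's English description precedes it below -/
import Mathlib

section
/- Let 0 < q < 1, x_T ≥ 1 a fixed natural number, and let S : ℕ → ℝ satisfy S(t) = 1 for t ≤ x_T and S(t) = S(t-1) - q^{x_T}(1-q)·S(t - x_T - 1) for t > x_T. Then there exist constants C > 0 and λ ∈ (0,1) with λ ≥ 1 - q^{x_T}(1-q) such that S(t) ≤ C·λ^t for all t, i.e. S decays exponentially. -/
theorem stmt2 (q : ℝ) (hq0 : 0 < q) (hq1 : q < 1) (xT : ℕ) (hxT : 1 ≤ xT)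
    (S : ℕ → ℝ)
    (hinit : ∀ t : ℕ, t ≤ xT → S t = 1)
    (hrec : ∀ t : ℕ, xT < t →
      S t = S (t - 1) - q ^ xT * (1 - q) * S (t - xT - 1)) :
    ∃ C > (0 : ℝ), ∃ lam : ℝ, lam ∈ Set.Ioo (0 : ℝ) 1 ∧
      1 - q ^ xT * (1 - q) ≤ lam ∧ ∀ t : ℕ, S t ≤ C * lam ^ t := by
  set c : ℝ := q ^ xT * (1 - q) with hc
  have hq1' : (0:ℝ) < 1 - q := by linarith
  have hc0 : 0 < c := by positivity
  have hqx1 : q ^ xT < 1 := pow_lt_one₀ hq0.le hq1 (by omega)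
  have hqx0 : 0 < q ^ xT := pow_pos hq0 xT
  have hc1 : c < 1 := by nlinarith
  have hlam0 : (0:ℝ) < 1 - c := by linarith
  have hlam1 : 1 - c < 1 := by linarith
  -- main invariant: positivity and S t ≥ q * S (t-1)
  have key : ∀ t, 0 < S t ∧ q * S (t - 1) ≤ S t := by
    intro t
    induction t using Nat.strong_induction_on with
    | _ t ih =>
      by_cases h : t ≤ xT
      · have h1 : S t = 1 := hinit t h
        have h2 : S (t - 1) = 1 := hinit _ (by omega)
        rw [h1, h2]
        exact ⟨one_pos, by nlinarith⟩
      · push_neg at h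
        have hrec' := hrec t h
        have chain : ∀ k, k ≤ xT → q ^ k * S (t - 1 - k) ≤ S (t - 1) := by
          intro k hk
          induction k with
          | zero => simp
          | succ k ihk =>
            have hk' : k ≤ xT := by omega
            have hs := (ih (t - 1 - k) (by omega)).2
            have hpos : (0:ℝ) < q ^ k := pow_pos hq0 k
            have e : t - 1 - k - 1 = t - 1 - (k + 1) := by omega
            rw [e] at hs
            calc q ^ (k + 1) * S (t - 1 - (k + 1))
                = q ^ k * (q * S (t - 1 - (k + 1))) := by ring
              _ ≤ q ^ k * S (t - 1 - k) :=
                  mul_le_mul_of_nonneg_left hs hpos.le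
              _ ≤ S (t - 1) := ihk hk'
        have hch := chain xT le_rfl
        have hpos1 : 0 < S (t - 1) := (ih (t - 1) (by omega)).1
        have e2 : t - xT - 1 = t - 1 - xT := by omega
        rw [e2] at hrec'
        have hb : c * S (t - 1 - xT) ≤ (1 - q) * S (t - 1) := by
          have e3 : c * S (t - 1 - xT) = (1 - q) * (q ^ xT * S (t - 1 - xT)) := by
            rw [hc]; ring
          rw [e3]
          exact mul_le_mul_of_nonneg_left hch hq1'.le
        constructor
        · rw [hrec']; nlinarith
        · rw [hrec']; nlinarith
  -- S is decreasing (antitone)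
  have hdec : ∀ t, S (t + 1) ≤ S t := by
    intro t
    by_cases h : t + 1 ≤ xT
    · rw [hinit (t + 1) h, hinit t (by omega)]
    · push_neg at h
      have hrec' := hrec (t + 1) h
      have hpos : 0 < S (t + 1 - xT - 1) := (key _).1
      have e : t + 1 - 1 = t := by omega
      rw [e] at hrec'
      rw [hrec']
      nlinarith
  have hanti : ∀ a b : ℕ, a ≤ b → S b ≤ S a := by
    intro a b hab
    exact antitone_nat_of_succ_le hdec hab
  -- contraction
  have hcontr : ∀ t, xT < t → S t ≤ (1 - c) * S (t - 1) := by
    intro t ht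
    have hrec' := hrec t ht
    have hmono : S (t - 1) ≤ S (t - xT - 1) := hanti _ _ (by omega)
    have hpos : 0 < S (t - 1) := (key _).1
    rw [hrec']
    nlinarith
  -- geometric bound from xT onward
  have hbound : ∀ k : ℕ, S (xT + k) ≤ (1 - c) ^ k := by
    intro k
    induction k with
    | zero => simp [hinit xT le_rfl]
    | succ k ihk =>
      have h1 : S (xT + (k + 1)) ≤ (1 - c) * S (xT + k) := by
        have := hcontr (xT + (k + 1)) (by omega)
        have e : xT + (k + 1) - 1 = xT + k := by omega
        rwa [e] at this
      calc S (xT + (k + 1)) ≤ (1 - c) * S (xT + k) := h1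
        _ ≤ (1 - c) * (1 - c) ^ k := mul_le_mul_of_nonneg_left ihk hlam0.le
        _ = (1 - c) ^ (k + 1) := by ring
  refine ⟨((1 - c) ^ xT)⁻¹, by positivity, 1 - c, ⟨hlam0, hlam1⟩, le_rfl, ?_⟩
  intro t
  rcases le_or_gt t xT with ht | ht
  · rw [hinit t ht]
    have h1 : (1 - c) ^ xT ≤ (1 - c) ^ t :=
      pow_le_pow_of_le_one hlam0.le hlam1.le ht
    calc (1:ℝ) = ((1 - c) ^ xT)⁻¹ * (1 - c) ^ xT := by
          field_simp
      _ ≤ ((1 - c) ^ xT)⁻¹ * (1 - c) ^ t :=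
          mul_le_mul_of_nonneg_left h1 (by positivity)
  · have e : t = xT + (t - xT) := by omega
    have h1 := hbound (t - xT)
    rw [← e] at h1
    calc S t ≤ (1 - c) ^ (t - xT) := h1
      _ = ((1 - c) ^ xT)⁻¹ * (1 - c) ^ t := by
          rw [e, pow_add]
          field_simp
          rw [Nat.add_sub_cancel_left]
end

section
/- Let 0 < q < 1, β > 0, and suppose x_T(t) → ∞ with x_T(t)/t → 0 as t → ∞. Define F(t) = (1 - 1/t)^{-β} - q^{x_T(t)}·(1-q)·(1 - (x_T(t)+1)/t)^{-β}. Then F(t) = 1 for all large t implies q^{x_T(t)} = (β/(1-q))·(1/t) + O(x_T(t)/t²) as t → ∞. -/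
open Filter Asymptotics Real

lemma aux_lin (p : ℝ) (hp : 0 < p) {x : ℝ} (hx0 : 0 ≤ x) (hx : x ≤ 1/2) :
    |(1 - x) ^ (-p) - 1| ≤ (p * 2 ^ (p + 1)) * x := by
  have hs : Convex ℝ (Set.Icc (0:ℝ) (1/2)) := convex_Icc _ _
  have hd : ∀ y ∈ Set.Icc (0:ℝ) (1/2),
      HasDerivWithinAt (fun y : ℝ => (1 - y) ^ (-p)) (p * (1 - y) ^ (-p - 1))
        (Set.Icc (0:ℝ) (1/2)) y := by
    intro y hy
    have hy1 : (1 : ℝ) - y ≠ 0 := by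
      have := hy.2; have := hy.1; intro h; nlinarith
    have h1 : HasDerivAt (fun y : ℝ => 1 - y) (-1) y := by
      simpa using (hasDerivAt_id y).const_sub 1
    have h2 := h1.rpow_const (p := -p) (Or.inl hy1)
    have : (-1 : ℝ) * (-p) * (1 - y) ^ (-p - 1) = p * (1 - y) ^ (-p - 1) := by ring
    rw [this] at h2
    exact h2.hasDerivWithinAt
  have hb : ∀ y ∈ Set.Icc (0:ℝ) (1/2),
      ‖p * (1 - y) ^ (-p - 1)‖ ≤ p * 2 ^ (p + 1) := by
    intro y hy
    have hy2 : (1:ℝ)/2 ≤ 1 - y := by have := hy.2; linarith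
    have hpos : (0:ℝ) < 1 - y := by linarith
    have hle : (1 - y) ^ (-p - 1) ≤ ((1:ℝ)/2) ^ (-p - 1) :=
      Real.rpow_le_rpow_of_nonpos (by norm_num) hy2 (by linarith)
    have heq : ((1:ℝ)/2) ^ (-p - 1) = 2 ^ (p + 1) := by
      rw [show (-p - 1 : ℝ) = -(p + 1) by ring, one_div,
        Real.inv_rpow (by norm_num), Real.rpow_neg (by norm_num), inv_inv]
    rw [Real.norm_eq_abs, abs_mul, abs_of_pos hp,
      abs_of_pos (Real.rpow_pos_of_pos hpos _)]
    calc p * (1 - y) ^ (-p - 1) ≤ p * ((1:ℝ)/2) ^ (-p - 1) := by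
          exact mul_le_mul_of_nonneg_left hle hp.le
      _ = p * 2 ^ (p + 1) := by rw [heq]
  have := hs.norm_image_sub_le_of_norm_hasDerivWithin_le hd hb
    (Set.mem_Icc.2 ⟨le_refl 0, by norm_num⟩) (Set.mem_Icc.2 ⟨hx0, hx⟩)
  simpa [Real.one_rpow, abs_of_nonneg hx0] using this

lemma aux_quad (p : ℝ) (hp : 0 < p) {x : ℝ} (hx0 : 0 ≤ x) (hx : x ≤ 1/2) :
    |(1 - x) ^ (-p) - 1 - p * x| ≤ (p * ((p + 1) * 2 ^ (p + 2))) * x ^ 2 := by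
  have hs : Convex ℝ (Set.Icc (0:ℝ) x) := convex_Icc _ _
  have hd : ∀ y ∈ Set.Icc (0:ℝ) x,
      HasDerivWithinAt (fun y : ℝ => (1 - y) ^ (-p) - 1 - p * y)
        (p * (1 - y) ^ (-p - 1) - p) (Set.Icc (0:ℝ) x) y := by
    intro y hy
    have hy2 : y ≤ 1/2 := le_trans hy.2 hx
    have hy1 : (1 : ℝ) - y ≠ 0 := by have := hy.1; intro h; nlinarith
    have h1 : HasDerivAt (fun y : ℝ => 1 - y) (-1) y := by
      simpa using (hasDerivAt_id y).const_sub 1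
    have h2 := h1.rpow_const (p := -p) (Or.inl hy1)
    have h3 : HasDerivAt (fun y : ℝ => (1 - y) ^ (-p) - 1 - p * y)
        ((-1) * (-p) * (1 - y) ^ (-p - 1) - 0 - p) y := by
      exact (h2.sub_const 1).sub ((hasDerivAt_id y).const_mul p |>.congr_deriv (by ring)) |>.congr_deriv (by ring)
    have : (-1 : ℝ) * (-p) * (1 - y) ^ (-p - 1) - 0 - p = p * (1 - y) ^ (-p - 1) - p := by ring
    rw [this] at h3
    exact h3.hasDerivWithinAt
  have hb : ∀ y ∈ Set.Icc (0:ℝ) x,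
      ‖p * (1 - y) ^ (-p - 1) - p‖ ≤ (p * ((p + 1) * 2 ^ (p + 2))) * x := by
    intro y hy
    have hy2 : y ≤ 1/2 := le_trans hy.2 hx
    have hlin := aux_lin (p + 1) (by linarith) hy.1 hy2
    have heq : (1 - y) ^ (-(p+1)) = (1 - y) ^ (-p - 1) := by ring_nf
    rw [heq] at hlin
    have : ‖p * (1 - y) ^ (-p - 1) - p‖ = p * |(1 - y) ^ (-p - 1) - 1| := by
      rw [Real.norm_eq_abs, show p * (1 - y) ^ (-p - 1) - p = p * ((1 - y) ^ (-p - 1) - 1) by ring,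
        abs_mul, abs_of_pos hp]
    rw [this]
    calc p * |(1 - y) ^ (-p - 1) - 1| ≤ p * (((p+1) * 2 ^ (p + 1 + 1)) * y) :=
          mul_le_mul_of_nonneg_left hlin hp.le
      _ ≤ (p * ((p + 1) * 2 ^ (p + 2))) * x := by
          rw [show (p + 1 + 1 : ℝ) = p + 2 by ring]
          have he2 : p * ((p+1) * 2^(p+2) * y) = (p * ((p + 1) * 2 ^ (p + 2))) * y := by ring
          rw [he2]
          exact mul_le_mul_of_nonneg_left hy.2 (by positivity)
  have := hs.norm_image_sub_le_of_norm_hasDerivWithin_le hd hb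
    (Set.mem_Icc.2 ⟨le_refl 0, hx0⟩) (Set.mem_Icc.2 ⟨hx0, le_refl x⟩)
  have h0 : ((1:ℝ) - 0) ^ (-p) - 1 - p * 0 = 0 := by simp
  rw [h0] at this
  calc |(1 - x) ^ (-p) - 1 - p * x| ≤ (p * ((p + 1) * 2 ^ (p + 2))) * x * ‖x - 0‖ := by
        simpa using this
    _ = (p * ((p + 1) * 2 ^ (p + 2))) * x ^ 2 := by
        rw [sub_zero, Real.norm_eq_abs, abs_of_nonneg hx0]; ring

theorem stmt6 (q β : ℝ) (hq0 : 0 < q) (hq1 : q < 1) (hβ : 0 < β)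
    (xT : ℝ → ℝ)
    (hx1 : Tendsto xT atTop atTop)
    (hx2 : Tendsto (fun t : ℝ => xT t / t) atTop (nhds 0))
    (hF : ∀ᶠ t : ℝ in atTop,
      (1 - 1 / t) ^ (-β) - q ^ xT t * (1 - q) * (1 - (xT t + 1) / t) ^ (-β) = 1) :
    (fun t : ℝ => q ^ xT t - (β / (1 - q)) * (1 / t)) =O[atTop]
      fun t : ℝ => xT t / t ^ 2 := by
  have hq' : (0:ℝ) < 1 - q := by linarith
  set M : ℝ := β * ((β + 1) * 2 ^ (β + 2)) with hM
  set C : ℝ := β * 2 ^ (β + 1) with hC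
  have hMpos : 0 < M := by positivity
  have hCpos : 0 < C := by positivity
  rw [isBigO_iff]
  refine ⟨(M + 2 * β * C) / (1 - q), ?_⟩
  have hg : Tendsto (fun t : ℝ => (xT t + 1) / t) atTop (nhds 0) := by
    have h1 : Tendsto (fun t : ℝ => xT t / t + 1 / t) atTop (nhds (0 + 0)) := by
      apply hx2.add
      have h0 : Tendsto (fun t : ℝ => t⁻¹) atTop (nhds 0) := tendsto_inv_atTop_zero
      exact h0.congr (fun t => (one_div t).symm)
    simpa [add_div] using h1
  have hsmall : ∀ᶠ t : ℝ in atTop, (xT t + 1) / t ≤ 1/2 :=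
    by
    have : ∀ᶠ x : ℝ in nhds 0, x ≤ 1/2 := eventually_le_nhds (by norm_num)
    exact hg.eventually this
  filter_upwards [hF, eventually_ge_atTop (2:ℝ), hx1.eventually (eventually_ge_atTop 1),
    hsmall] with t hFt ht2 hxt hst
  have ht0 : (0:ℝ) < t := by linarith
  set Q := q ^ xT t with hQ
  set s := (xT t + 1) / t with hsdef
  set A := (1 - 1/t) ^ (-β) with hA
  set B := (1 - s) ^ (-β) with hB
  have hu0 : (0:ℝ) ≤ 1/t := by positivity
  have hu : 1/t ≤ 1/2 := by
    rw [div_le_div_iff₀ ht0 (by norm_num)]; linarith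
  have hs0 : (0:ℝ) ≤ s := by
    apply div_nonneg _ ht0.le; linarith
  have hB1 : (1:ℝ) ≤ B := by
    have h1 : (1:ℝ) ^ (-β) ≤ (1 - s) ^ (-β) :=
      Real.rpow_le_rpow_of_nonpos (by linarith) (by linarith) (by linarith)
    simpa using h1
  have hB0 : (0:ℝ) < B := lt_of_lt_of_le one_pos hB1
  -- rearrange hF
  have hD : (Q - (β / (1 - q)) * (1 / t)) * ((1 - q) * B)
      = (A - 1 - β * (1/t)) + (β * (1/t)) * (1 - B) := by
    have h1 : Q * (1 - q) * B = A - 1 := by linarith [hFt]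
    field_simp
    linear_combination t * h1
  have claim1 : |A - 1 - β * (1/t)| ≤ M * (1/t)^2 := by
    simpa [hA, hM] using aux_quad β hβ hu0 hu
  have claim2 : |1 - B| ≤ C * s := by
    have := aux_lin β hβ hs0 hst
    rw [abs_sub_comm]
    simpa [hB, hC] using this
  have hnum : |(A - 1 - β * (1/t)) + (β * (1/t)) * (1 - B)|
      ≤ (M + 2 * β * C) * (xT t / t^2) := by
    have h1 : |(A - 1 - β * (1/t)) + (β * (1/t)) * (1 - B)|
        ≤ |A - 1 - β * (1/t)| + (β * (1/t)) * |1 - B| := by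
      calc _ ≤ |A - 1 - β * (1/t)| + |(β * (1/t)) * (1 - B)| := abs_add_le _ _
        _ = |A - 1 - β * (1/t)| + (β * (1/t)) * |1 - B| := by
            rw [abs_mul, abs_of_nonneg (by positivity : (0:ℝ) ≤ β * (1/t))]
    have h2 : (β * (1/t)) * |1 - B| ≤ (β * (1/t)) * (C * s) :=
      mul_le_mul_of_nonneg_left claim2 (by positivity)
    have hs2 : s ≤ 2 * (xT t / t) := by
      rw [hsdef, div_le_iff₀ ht0]
      have : 2 * (xT t / t) * t = 2 * xT t := by field_simp
      rw [this]; linarith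
    have h3 : (β * (1/t)) * (C * s) ≤ 2 * β * C * (xT t / t^2) := by
      have : (β * (1/t)) * (C * (2 * (xT t / t))) = 2 * β * C * (xT t / t^2) := by
        field_simp
      calc (β * (1/t)) * (C * s) ≤ (β * (1/t)) * (C * (2 * (xT t / t))) := by
            apply mul_le_mul_of_nonneg_left _ (by positivity)
            exact mul_le_mul_of_nonneg_left hs2 hCpos.le
        _ = 2 * β * C * (xT t / t^2) := this
    have h4 : M * (1/t)^2 ≤ M * (xT t / t^2) := by
      apply mul_le_mul_of_nonneg_left _ hMpos.le
      rw [div_pow, one_pow]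
      apply div_le_div_of_nonneg_right ?_ (by positivity)
      · linarith
    calc |(A - 1 - β * (1/t)) + (β * (1/t)) * (1 - B)|
        ≤ |A - 1 - β * (1/t)| + (β * (1/t)) * |1 - B| := h1
      _ ≤ M * (1/t)^2 + (β * (1/t)) * (C * s) := add_le_add claim1 h2
      _ ≤ M * (xT t / t^2) + 2 * β * C * (xT t / t^2) := add_le_add h4 h3
      _ = (M + 2 * β * C) * (xT t / t^2) := by ring
  -- conclude
  have hxpos : 0 ≤ xT t / t^2 := by positivity
  rw [Real.norm_eq_abs, Real.norm_eq_abs, abs_of_nonneg hxpos]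
  have hDabs : |Q - (β / (1 - q)) * (1 / t)| * ((1 - q) * B)
      ≤ (M + 2 * β * C) * (xT t / t^2) := by
    rw [← abs_of_pos (show (0:ℝ) < (1 - q) * B by positivity), ← abs_mul, hD]
    exact hnum
  have hfinal : |Q - (β / (1 - q)) * (1 / t)|
      ≤ (M + 2 * β * C) * (xT t / t^2) / ((1 - q) * B) := by
    rw [le_div_iff₀ (by positivity)]
    exact hDabs
  calc |Q - (β / (1 - q)) * (1 / t)|
      ≤ (M + 2 * β * C) * (xT t / t^2) / ((1 - q) * B) := hfinal
    _ ≤ (M + 2 * β * C) * (xT t / t^2) / (1 - q) := by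
        exact div_le_div_of_nonneg_left (by positivity) hq' (by nlinarith)
    _ = (M + 2 * β * C) / (1 - q) * (xT t / t^2) := by ring
end

section
/- Let 0 < q < 1, b ∈ ℝ, a = 1/ln(1/q), and set β = (1-q)·q^b. Then with x_T(t) = a·ln t + b, the power-law function S(t) = α·t^{-β} satisfies the asymptotic balance S(t-1) - S(t) = q^{x_T(t)}·(1-q)·S(t - x_T(t) - 1)·(1 + o(1)) as t → ∞, for any α > 0. -/
open Filter Asymptotics Real Topology

theorem stmt8 (q b α : ℝ) (hq0 : 0 < q) (hq1 : q < 1) (hα : 0 < α)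
    (a β : ℝ) (ha : a = 1 / Real.log (1 / q)) (hβ : β = (1 - q) * q ^ b)
    (S xT : ℝ → ℝ)
    (hS : ∀ t : ℝ, S t = α * t ^ (-β))
    (hxT : ∀ t : ℝ, xT t = a * Real.log t + b) :
    (fun t : ℝ => S (t - 1) - S t) ~[atTop]
      fun t : ℝ => q ^ xT t * (1 - q) * S (t - xT t - 1) := by
  have hq1' : (0:ℝ) < 1 - q := by linarith
  have hqb : (0:ℝ) < q ^ b := Real.rpow_pos_of_pos hq0 b
  have hβ0 : 0 < β := by rw [hβ]; positivity
  have hlogq : Real.log q < 0 := Real.log_neg hq0 hq1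
  have halogq : a * Real.log q = -1 := by
    rw [ha, Real.log_div one_ne_zero (ne_of_gt hq0), Real.log_one]
    field_simp
    rw [zero_sub, div_neg, div_self hlogq.ne]
  set c : ℝ → ℝ := fun t => (a * Real.log t + b + 1) / t with hc_def
  have hc : Tendsto c atTop (𝓝 0) := by
    have h1 : Tendsto (fun t : ℝ => Real.log t / t) atTop (𝓝 0) := by
      simpa using Real.isLittleO_log_id_atTop.tendsto_div_nhds_zero
    have h2 : Tendsto (fun t : ℝ => a * (Real.log t / t) + (b + 1) * t⁻¹) atTop
        (𝓝 (a * 0 + (b + 1) * 0)) :=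
      ((h1.const_mul a).add ((tendsto_inv_atTop_zero).const_mul (b + 1)))
    simp only [mul_zero, add_zero] at h2
    refine h2.congr' ?_
    filter_upwards [eventually_gt_atTop (0:ℝ)] with t ht
    simp only [hc_def]
    field_simp
    ring
  -- derivative fact / slope limit
  have hder : HasDerivAt (fun x : ℝ => (1 - x) ^ (-β)) β 0 := by
    have h1 : HasDerivAt (fun y : ℝ => y ^ (-β)) (-β * (1:ℝ) ^ (-β - 1)) 1 :=
      Real.hasDerivAt_rpow_const (Or.inl one_ne_zero)
    have h2 : HasDerivAt (fun x : ℝ => 1 - x) (-1) 0 := by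
      simpa using (hasDerivAt_id (0:ℝ)).const_sub 1
    have h1' : HasDerivAt (fun y : ℝ => y ^ (-β)) (-β * (1:ℝ) ^ (-β - 1))
        ((fun x : ℝ => (1:ℝ) - x) 0) := by simpa using h1
    have h3 := h1'.comp 0 h2
    simp only [Real.one_rpow, mul_one, mul_neg, neg_neg] at h3
    exact h3
  have hslope : Tendsto (fun x : ℝ => ((1 - x) ^ (-β) - 1) / x) (𝓝[≠] (0:ℝ)) (𝓝 β) := by
    have := hasDerivAt_iff_tendsto_slope.mp hder
    refine this.congr (fun x => ?_)
    simp [slope_def_field, div_eq_div_iff]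
  have hinv : Tendsto (fun t : ℝ => 1 / t) atTop (𝓝[≠] (0:ℝ)) := by
    have := tendsto_inv_atTop_nhdsGT_zero (𝕜 := ℝ)
    refine (this.mono_right (nhdsWithin_mono _ ?_)).congr (fun t => (one_div t).symm)
    intro x hx
    exact ne_of_gt hx
  have hA : Tendsto (fun t : ℝ => ((1 - 1 / t) ^ (-β) - 1) / (1 / t)) atTop (𝓝 β) :=
    hslope.comp hinv
  have hB : Tendsto (fun t : ℝ => (1 - c t) ^ β) atTop (𝓝 1) := by
    have h1 : Tendsto (fun t : ℝ => 1 - c t) atTop (𝓝 1) := by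
      simpa using (tendsto_const_nhds.sub hc)
    simpa using h1.rpow_const (Or.inl one_ne_zero)
  have hG : Tendsto (fun t : ℝ => ((1 - 1 / t) ^ (-β) - 1) / (1 / t) * β⁻¹ * (1 - c t) ^ β)
      atTop (𝓝 1) := by
    have := (hA.mul_const β⁻¹).mul hB
    simpa [mul_inv_cancel₀ (ne_of_gt hβ0)] using this
  -- eventual nonvanishing of RHS
  have hev : ∀ᶠ t : ℝ in atTop, 2 < t ∧ |c t| < 1/2 := by
    filter_upwards [eventually_gt_atTop (2:ℝ),
      hc.eventually (eventually_abs_sub_lt 0 (by norm_num : (0:ℝ) < 1/2))] with t h1 h2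
    refine ⟨h1, by simpa using h2⟩
  have hne : ∀ᶠ t : ℝ in atTop, q ^ xT t * (1 - q) * S (t - xT t - 1) ≠ 0 := by
    filter_upwards [hev] with t ⟨ht2, hct⟩
    have h0t : (0:ℝ) < t := by linarith
    have hct1 : c t < 1 := lt_of_le_of_lt (le_abs_self _) (by linarith)
    have hpos : 0 < t - xT t - 1 := by
      have : t - xT t - 1 = t * (1 - c t) := by
        rw [hxT]; simp only [hc_def]; field_simp; ring
      rw [this]
      have h1ct : (0:ℝ) < 1 - c t := by linarith
      exact mul_pos h0t h1ct
    have : 0 < q ^ xT t * (1 - q) * S (t - xT t - 1) := by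
      rw [hS]
      exact mul_pos (mul_pos (Real.rpow_pos_of_pos hq0 _) hq1')
        (mul_pos hα (Real.rpow_pos_of_pos hpos _))
    exact ne_of_gt this
  rw [isEquivalent_iff_tendsto_one hne]
  refine hG.congr' ?_
  filter_upwards [hev] with t ⟨ht2, hct⟩
  have h0t : (0:ℝ) < t := by linarith
  have hct1 : c t < 1 := lt_of_le_of_lt (le_abs_self _) (by linarith)
  have h1ct : (0:ℝ) < 1 - c t := by linarith
  have h1t : (0:ℝ) < 1 - 1/t := by
    have : 1/t < 1/2 := by
      rw [div_lt_div_iff₀ h0t (by norm_num)]; linarith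
    linarith
  have key3 : t - xT t - 1 = t * (1 - c t) := by
    rw [hxT]; simp only [hc_def]; field_simp; ring
  have key1 : t - 1 = t * (1 - 1/t) := by field_simp
  have key2 : (t - 1) ^ (-β) = t ^ (-β) * (1 - 1/t) ^ (-β) := by
    rw [key1, Real.mul_rpow h0t.le h1t.le]
  have key4 : (t - xT t - 1) ^ (-β) = t ^ (-β) * (1 - c t) ^ (-β) := by
    rw [key3, Real.mul_rpow h0t.le h1ct.le]
  have key5 : q ^ xT t = q ^ b * t⁻¹ := by
    rw [hxT, Real.rpow_add hq0, Real.rpow_def_of_pos hq0,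
      show Real.log q * (a * Real.log t) = (a * Real.log q) * Real.log t by ring,
      halogq, mul_comm]
    congr 1
    rw [neg_one_mul, Real.exp_neg, Real.exp_log h0t]
  have htβ : (0:ℝ) < t ^ (-β) := Real.rpow_pos_of_pos h0t _
  have hcβ : (0:ℝ) < (1 - c t) ^ (-β) := Real.rpow_pos_of_pos h1ct _
  have hcβ' : (1 - c t) ^ (-β) = ((1 - c t) ^ β)⁻¹ := by
    rw [Real.rpow_neg h1ct.le]
  show _ = (fun x => S (x-1) - S x) t / _
  simp only [Pi.div_apply]
  rw [hS, hS, hS, key2, key4, key5, hcβ']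
  have hcβ2 : (0:ℝ) < (1 - c t) ^ β := Real.rpow_pos_of_pos h1ct _
  field_simp
  rw [hβ]
  ring
end

section
/- Let 0 < q < 1 and let N_k(t) denote the number of Sisyphus walkers at position k at time t, evolving by N_0(t+1) = (1-q)·∑_{k=0}^{x_T-1} N_k(t) and N_{k+1}(t+1) = q·N_k(t) for 0 ≤ k < x_T - 1, with a static trap at x_T ≥ 1 and initial condition N_0(0)=1, N_k(0)=0 for k ≥ 1. Then the number absorbed at time t, d(t) = q·N_{x_T-1}(t-1), satisfies d(t) = q^{x_T}·(1-q)·N_tot(t - x_T - 1) for all t ≥ x_T + 1, where N_tot(s) = ∑_{k=0}^{x_T-1} N_k(s). -/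
theorem stmt11 (q : ℝ) (hq0 : 0 < q) (hq1 : q < 1) (xT : ℕ) (hxT : 1 ≤ xT)
    (N : ℕ → ℕ → ℝ)
    (h00 : N 0 0 = 1)
    (h0k : ∀ k : ℕ, 1 ≤ k → N k 0 = 0)
    (hrec0 : ∀ t : ℕ, N 0 (t + 1) = (1 - q) * ∑ k ∈ Finset.range xT, N k t)
    (hrec : ∀ t : ℕ, ∀ k : ℕ, k < xT - 1 → N (k + 1) (t + 1) = q * N k t) :
    ∀ t : ℕ, xT + 1 ≤ t →
      q * N (xT - 1) (t - 1) =
        q ^ xT * (1 - q) * ∑ k ∈ Finset.range xT, N k (t - xT - 1) := by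
  have key : ∀ j : ℕ, j ≤ xT - 1 → ∀ s : ℕ, N j (s + j) = q ^ j * N 0 s := by
    intro j
    induction j with
    | zero => intro _ s; simp
    | succ j ih =>
      intro hj s
      have hj' : j ≤ xT - 1 := Nat.le_of_succ_le hj
      have hjlt : j < xT - 1 := hj
      have : N (j + 1) (s + j + 1) = q * N j (s + j) := hrec (s + j) j hjlt
      rw [show s + (j + 1) = s + j + 1 by ring, this, ih hj' s]
      ring
  intro t ht
  have hs : t - 1 = (t - xT) + (xT - 1) := by omega
  rw [hs, key (xT - 1) le_rfl (t - xT)]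
  have h1 : t - xT = (t - xT - 1) + 1 := by omega
  rw [h1, hrec0]
  have h2 : t - xT - 1 + 1 - 1 = t - xT - 1 := by omega
  rw [h2]
  have : q * q ^ (xT - 1) = q ^ xT := by
    rw [← pow_succ']
    congr 1
    omega
  rw [show t - xT - 1 = t - xT - 1 from rfl]
  rw [← this]
  ring
end

section
/- Let 0 < q < 1, x_T ≥ 1, and let S : ℕ → ℝ satisfy S(t) = 1 for t ≤ x_T and S(t) = S(t-1) - q^{x_T}(1-q)·S(t - x_T - 1) for t > x_T. Then the limit γ = lim_{t→∞} -ln S(t)/t exists and equals -ln λ*, where λ* ∈ (0,1) is the unique real root in (0,1) of the characteristic polynomial λ^{x_T+1} - λ^{x_T} + q^{x_T}(1-q) = 0 of largest modulus, provided q^{x_T}(1-q) < x_T^{x_T}/(x_T+1)^{x_T+1}. -/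
open Filter Real Set

private noncomputable def nuSeq (Q : ℝ) (xT : ℕ) : ℕ → ℝ
  | 0 => 1
  | k + 1 => 1 - Q / (nuSeq Q xT k) ^ xT

set_option maxHeartbeats 1000000 in
theorem stmt12 (q : ℝ) (hq0 : 0 < q) (hq1 : q < 1) (xT : ℕ) (hxT : 1 ≤ xT)
    (hroot : q ^ xT * (1 - q) < (xT : ℝ) ^ xT / ((xT : ℝ) + 1) ^ (xT + 1))
    (S : ℕ → ℝ)
    (hinit : ∀ t : ℕ, t ≤ xT → S t = 1)
    (hrec : ∀ t : ℕ, xT < t →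
      S t = S (t - 1) - q ^ xT * (1 - q) * S (t - xT - 1)) :
    ∃ lam : ℝ, lam ∈ Ioo (0 : ℝ) 1 ∧
      lam ^ (xT + 1) - lam ^ xT + q ^ xT * (1 - q) = 0 ∧
      (∀ μ : ℝ, μ ∈ Ioo (0 : ℝ) 1 →
        μ ^ (xT + 1) - μ ^ xT + q ^ xT * (1 - q) = 0 → μ ≤ lam) ∧
      Tendsto (fun t : ℕ => -Real.log (S t) / t) atTop (nhds (-Real.log lam)) := by
  set Q : ℝ := q ^ xT * (1 - q) with hQdef
  have hQ : 0 < Q := mul_pos (pow_pos hq0 xT) (by linarith)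
  set f : ℝ → ℝ := fun x => x ^ (xT + 1) - x ^ xT + Q with hfdef
  have hfc : Continuous f := by continuity
  set c : ℝ := (xT : ℝ) / ((xT : ℝ) + 1) with hcdef
  have hxTpos : (0:ℝ) < (xT : ℝ) := by exact_mod_cast hxT
  have hx1 : (0:ℝ) < (xT : ℝ) + 1 := by linarith
  have hc0 : 0 < c := div_pos hxTpos hx1
  have hc1 : c < 1 := (div_lt_one hx1).2 (by linarith)
  have hfcneg : f c < 0 := by
    have hcpow : c ^ xT * (1 - c) = (xT : ℝ) ^ xT / ((xT : ℝ) + 1) ^ (xT + 1) := by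
      rw [hcdef, div_pow, pow_succ]
      field_simp
      ring
    have : f c = Q - c ^ xT * (1 - c) := by
      simp only [hfdef, pow_succ]; ring
    rw [this, hcpow]; linarith
  have hf1 : f 1 = Q := by simp [hfdef]
  -- root set
  set R : Set ℝ := {x | x ∈ Icc c 1 ∧ f x = 0} with hRdef
  have hRne : R.Nonempty := by
    have h0 : (0:ℝ) ∈ Icc (f c) (f 1) := ⟨le_of_lt hfcneg, by rw [hf1]; exact hQ.le⟩
    obtain ⟨x, hx, hfx⟩ := intermediate_value_Icc hc1.le hfc.continuousOn h0
    exact ⟨x, hx, hfx⟩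
  have hRcomp : IsCompact R := by
    have : R = Icc c 1 ∩ f ⁻¹' {0} := by
      ext x; simp [hRdef, and_comm]
    rw [this]
    exact (isCompact_Icc).inter_right (isClosed_singleton.preimage hfc)
  set lam : ℝ := sSup R with hlamdef
  have hlamR : lam ∈ R := hRcomp.sSup_mem hRne
  have hflam : f lam = 0 := hlamR.2
  have hlamc : c ≤ lam := hlamR.1.1
  have hlam1' : lam ≤ 1 := hlamR.1.2
  have hlam1 : lam < 1 := lt_of_le_of_ne hlam1' (by
    intro h; rw [h] at hflam; rw [hf1] at hflam; linarith)
  have hlam0 : 0 < lam := lt_of_lt_of_le hc0 hlamc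
  have hBdd : BddAbove R := hRcomp.bddAbove
  have hmax : ∀ μ : ℝ, μ ∈ Ioo (0:ℝ) 1 → f μ = 0 → μ ≤ lam := by
    intro μ hμ hfμ
    rcases le_or_gt μ c with h | h
    · exact h.trans hlamc
    · exact le_csSup hBdd ⟨⟨h.le, hμ.2.le⟩, hfμ⟩
  -- f positive on (lam, 1]
  have hfpos : ∀ ν : ℝ, lam < ν → ν ≤ 1 → 0 < f ν := by
    intro ν hν hν1
    by_contra h
    push_neg at h
    have hνlt1 : ν < 1 := lt_of_le_of_ne hν1 (by
      intro he; rw [he, hf1] at h; linarith)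
    have h0 : (0:ℝ) ∈ Icc (f ν) (f 1) := ⟨h, by rw [hf1]; exact hQ.le⟩
    obtain ⟨ρ, hρ, hfρ⟩ := intermediate_value_Icc hνlt1.le hfc.continuousOn h0
    have : ρ ≤ lam := le_csSup hBdd ⟨⟨le_trans hlamc (le_trans hν.le hρ.1), hρ.2⟩, hfρ⟩
    linarith [hρ.1]
  -- characteristic identities
  have hchar : lam ^ (xT + 1) - lam ^ xT + Q = 0 := hflam
  have hpowsucc : lam ^ (xT + 1) = lam ^ xT * lam := pow_succ lam xT
  have hQlam : Q = lam ^ xT * (1 - lam) := by nlinarith [hchar]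
  ------------------------------------------------------------------
  -- step bounds on S
  have hstep : ∀ t : ℕ, lam * S t ≤ S (t + 1) ∧ S (t + 1) ≤ S t := by
    intro t
    induction t using Nat.strong_induction_on with
    | _ t IH =>
      rcases le_or_gt (t + 1) xT with h | h
      · have h1 : S (t + 1) = 1 := hinit _ h
        have h2 : S t = 1 := hinit _ (by omega)
        rw [h1, h2]; exact ⟨by nlinarith, le_rfl⟩
      · set a := t - xT with hadef
        have hta : t = a + xT := by omega
        have hpos : ∀ s : ℕ, s ≤ t → 0 < S s := by
          intro s hs
          induction s with
          | zero => rw [hinit 0 (by omega)]; norm_num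
          | succ n IHn =>
            have hn : 0 < S n := IHn (by omega)
            have := (IH n (by omega)).1
            nlinarith
        have hchain : ∀ k : ℕ, k ≤ xT → lam ^ k * S a ≤ S (a + k) ∧ S (a + k) ≤ S a := by
          intro k hk
          induction k with
          | zero => simp
          | succ m IHm =>
            obtain ⟨hlo, hhi⟩ := IHm (by omega)
            obtain ⟨hl, hh⟩ := IH (a + m) (by omega)
            have hSam : 0 < S (a + m) := hpos (a + m) (by omega)
            refine ⟨?_, ?_⟩
            · have h1 : lam ^ (m + 1) * S a = lam * (lam ^ m * S a) := by ring
              have h2 : lam * (lam ^ m * S a) ≤ lam * S (a + m) :=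
                mul_le_mul_of_nonneg_left hlo hlam0.le
              have h3 : a + (m + 1) = a + m + 1 := by omega
              rw [h3, h1]
              exact h2.trans hl
            · have h3 : a + (m + 1) = a + m + 1 := by omega
              rw [h3]
              exact hh.trans hhi
        obtain ⟨hwlo, hwhi⟩ := hchain xT le_rfl
        rw [← hta] at hwlo hwhi
        have hrect : S (t + 1) = S t - Q * S a := by
          have h5 := hrec (t + 1) (by omega)
          have e1 : t + 1 - 1 = t := by omega
          have e2 : t + 1 - xT - 1 = a := by omega
          rw [e1, e2] at h5; exact h5
        have hSa : 0 < S a := hpos a (by omega)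
        have hSt : 0 < S t := hpos t le_rfl
        constructor
        · rw [hrect]
          have hq1' : Q * S a = (1 - lam) * (lam ^ xT * S a) := by rw [hQlam]; ring
          nlinarith [hwlo]
        · rw [hrect]; nlinarith
  have hSpos : ∀ t : ℕ, 0 < S t := by
    intro t
    induction t with
    | zero => rw [hinit 0 (by omega)]; norm_num
    | succ n IHn => have := (hstep n).1; nlinarith
  have hlow : ∀ t : ℕ, lam ^ t ≤ S t := by
    intro t
    induction t with
    | zero => rw [hinit 0 (by omega)]; norm_num
    | succ n IHn =>
      have h1 := (hstep n).1
      have : lam ^ (n + 1) = lam * lam ^ n := by ring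
      rw [this]
      nlinarith
  ------------------------------------------------------------------
  -- the iteration sequence
  set ν : ℕ → ℝ := nuSeq Q xT with hνdef
  have hν0 : ν 0 = 1 := rfl
  have hνs : ∀ k, ν (k + 1) = 1 - Q / (ν k) ^ xT := fun k => rfl
  have hQdivlam : Q / lam ^ xT = 1 - lam := by
    rw [hQlam]
    field_simp
  have hνlam : ∀ k, lam ≤ ν k ∧ ν k ≤ 1 := by
    intro k
    induction k with
    | zero => rw [hν0]; exact ⟨hlam1', le_rfl⟩
    | succ m IHm =>
      obtain ⟨h1, h2⟩ := IHm
      have hνm : 0 < ν m := lt_of_lt_of_le hlam0 h1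
      rw [hνs]
      constructor
      · have hpow : lam ^ xT ≤ ν m ^ xT := pow_le_pow_left₀ hlam0.le h1 xT
        have hle : Q / ν m ^ xT ≤ Q / lam ^ xT := by
          apply div_le_div_of_nonneg_left hQ.le (pow_pos hlam0 xT) hpow
        rw [hQdivlam] at hle
        linarith
      · have : 0 < Q / ν m ^ xT := div_pos hQ (pow_pos hνm xT)
        linarith
  have hνanti : ∀ k, ν (k + 1) ≤ ν k := by
    intro k
    obtain ⟨h1, h2⟩ := hνlam k
    rcases eq_or_lt_of_le h1 with he | hlt
    · rw [hνs, ← he, hQdivlam]; linarith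
    · have hf := hfpos (ν k) hlt h2
      have hνk : 0 < ν k := lt_trans hlam0 hlt
      have hp : 0 < ν k ^ xT := pow_pos hνk xT
      have hfexp : ν k ^ xT * ν k - ν k ^ xT + Q > 0 := by
        have : f (ν k) = ν k ^ (xT + 1) - ν k ^ xT + Q := rfl
        nlinarith [pow_succ (ν k) xT]
      rw [hνs]
      have h4 : (1 - ν k) ≤ Q / ν k ^ xT := by
        rw [le_div_iff₀ hp]; nlinarith
      linarith
  have hanti : Antitone ν := antitone_nat_of_succ_le hνanti
  have hbdd : BddBelow (range ν) := ⟨lam, by rintro x ⟨k, rfl⟩; exact (hνlam k).1⟩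
  have htend : Tendsto ν atTop (nhds (⨅ k, ν k)) := tendsto_atTop_ciInf hanti hbdd
  set L : ℝ := ⨅ k, ν k with hLdef
  have hLlam : lam ≤ L := le_ciInf fun k => (hνlam k).1
  have hL0 : 0 < L := lt_of_lt_of_le hlam0 hLlam
  have hL1 : L ≤ ν 1 := ciInf_le hbdd 1
  have hν1 : ν 1 = 1 - Q := by rw [hνs, hν0, one_pow, div_one]
  have hLlt1 : L < 1 := by rw [hν1] at hL1; linarith
  have hfix : L = 1 - Q / L ^ xT := by
    have hshift : Tendsto (fun k => ν (k + 1)) atTop (nhds L) :=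
      htend.comp (tendsto_add_atTop_nat 1)
    have hg : Tendsto (fun k => 1 - Q / ν k ^ xT) atTop (nhds (1 - Q / L ^ xT)) := by
      apply Tendsto.sub tendsto_const_nhds
      exact Tendsto.div tendsto_const_nhds (htend.pow xT) (ne_of_gt (pow_pos hL0 xT))
    have : Tendsto (fun k => ν (k + 1)) atTop (nhds (1 - Q / L ^ xT)) := by
      simpa only [hνs] using hg
    exact tendsto_nhds_unique hshift this
  have hfL : f L = 0 := by
    have hp : (0:ℝ) < L ^ xT := pow_pos hL0 xT
    have h6 : L * L ^ xT = L ^ xT - Q := by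
      have := hfix
      field_simp at this
      linarith
    have : f L = L ^ (xT + 1) - L ^ xT + Q := rfl
    rw [this, pow_succ]
    nlinarith
  have hLlam' : L ≤ lam := hmax L ⟨hL0, hLlt1⟩ hfL
  have hLeq : L = lam := le_antisymm hLlam' hLlam
  rw [hLeq] at htend
  ------------------------------------------------------------------
  -- upper ratio bounds
  have hνpos : ∀ k, 0 < ν k := fun k => lt_of_lt_of_le hlam0 (hνlam k).1
  have hBnd : ∀ k t, k * xT ≤ t → S (t + 1) ≤ ν k * S t := by
    intro k
    induction k with
    | zero => intro t _; rw [hν0, one_mul]; exact (hstep t).2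
    | succ m IHm =>
      intro t ht
      have h2 : m * xT + xT ≤ t := by
        have : (m + 1) * xT = m * xT + xT := by ring
        omega
      set a := t - xT with hadef
      have hta : t = a + xT := by omega
      have hchainU : ∀ j, j ≤ xT → S (a + j) ≤ ν m ^ j * S a := by
        intro j hj
        induction j with
        | zero => simp
        | succ i IHi =>
          have h3 : m * xT ≤ a + i := by omega
          have h4 := IHm (a + i) h3
          have hνm0 : 0 ≤ ν m := (hνpos m).le
          have h5 : a + (i + 1) = a + i + 1 := by omega
          rw [h5]
          calc S (a + i + 1) ≤ ν m * S (a + i) := h4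
            _ ≤ ν m * (ν m ^ i * S a) := by nlinarith [IHi (by omega)]
            _ = ν m ^ (i + 1) * S a := by ring
      have hSt_le : S t ≤ ν m ^ xT * S a := by
        rw [hta]; exact hchainU xT le_rfl
      have hrect : S (t + 1) = S t - Q * S a := by
        have h5 := hrec (t + 1) (by omega)
        have e1 : t + 1 - 1 = t := by omega
        have e2 : t + 1 - xT - 1 = a := by omega
        rw [e1, e2] at h5; exact h5
      rw [hνs, hrect]
      have hp : 0 < ν m ^ xT := pow_pos (hνpos m) xT
      have h7 : Q / ν m ^ xT * S t ≤ Q * S a := by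
        rw [div_mul_eq_mul_div, div_le_iff₀ hp]
        nlinarith [hSt_le, hSpos a]
      nlinarith [hSpos t]
  -- geometric decay from each cutoff
  have hgeo : ∀ k n, S (k * xT + n) ≤ ν k ^ n * S (k * xT) := by
    intro k n
    induction n with
    | zero => simp
    | succ i IHi =>
      have h4 := hBnd k (k * xT + i) (Nat.le_add_right _ _)
      have h5 : k * xT + (i + 1) = k * xT + i + 1 := by omega
      rw [h5]
      calc S (k * xT + i + 1) ≤ ν k * S (k * xT + i) := h4
        _ ≤ ν k * (ν k ^ i * S (k * xT)) := by nlinarith [IHi, hνpos k, hSpos (k * xT + i)]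
        _ = ν k ^ (i + 1) * S (k * xT) := by ring
  ------------------------------------------------------------------
  refine ⟨lam, ⟨hlam0, hlam1⟩, hchar, fun μ hμ hfμ => hmax μ hμ hfμ, ?_⟩
  rw [Metric.tendsto_atTop]
  intro ε hε
  -- choose k with log (ν k) close to log lam
  have hlogtend : Tendsto (fun k => Real.log (ν k)) atTop (nhds (Real.log lam)) :=
    ((Real.continuousAt_log (ne_of_gt hlam0)).tendsto).comp htend
  have hev : ∀ᶠ k in atTop, Real.log (ν k) < Real.log lam + ε / 2 := by
    have := hlogtend.eventually (eventually_lt_nhds (by linarith : Real.log lam < Real.log lam + ε / 2))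
    exact this
  obtain ⟨k, hk⟩ := hev.exists
  set T : ℕ := k * xT with hTdef
  set C : ℝ := |Real.log (S T)| + (T : ℝ) * |Real.log (ν k)| with hCdef
  have hC0 : 0 ≤ C := by positivity
  obtain ⟨N₁, hN₁⟩ := exists_nat_gt (2 * C / ε)
  refine ⟨max (T + 1) N₁, fun t htN => ?_⟩
  have htT : T ≤ t := le_trans (Nat.le_succ T) (le_trans (le_max_left _ _) htN)
  have ht1 : 1 ≤ t := le_trans (by omega) htN
  have htR : (0:ℝ) < (t:ℝ) := by exact_mod_cast Nat.lt_of_lt_of_le Nat.zero_lt_one ht1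
  have htN₁ : (N₁:ℝ) ≤ (t:ℝ) := by exact_mod_cast le_trans (le_max_right _ _) htN
  have hCt : C / t < ε / 2 := by
    rw [div_lt_iff₀ htR]
    have h8 : 2 * C / ε < (t:ℝ) := lt_of_lt_of_le hN₁ htN₁
    rw [div_lt_iff₀ hε] at h8
    linarith
  -- lower bound
  have hlb : Real.log lam ≤ Real.log (S t) / t := by
    have h9 : lam ^ t ≤ S t := hlow t
    have h10 : Real.log (lam ^ t) ≤ Real.log (S t) :=
      Real.log_le_log (pow_pos hlam0 t) h9
    rw [Real.log_pow] at h10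
    rw [le_div_iff₀ htR]
    linarith [h10]
  -- upper bound
  have hub : Real.log (S t) / t < Real.log lam + ε := by
    set n : ℕ := t - T with hndef
    have htn : t = T + n := by omega
    have h11 : S t ≤ ν k ^ n * S T := by rw [htn]; exact hgeo k n
    have h12 : Real.log (S t) ≤ (n:ℝ) * Real.log (ν k) + Real.log (S T) := by
      have := Real.log_le_log (hSpos t) h11
      rw [Real.log_mul (ne_of_gt (pow_pos (hνpos k) n)) (ne_of_gt (hSpos T)),
        Real.log_pow] at this
      linarith
    have hnt : (n:ℝ) = (t:ℝ) - (T:ℝ) := by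
      rw [htn]; push_cast; ring
    have h13 : Real.log (S t) ≤ (t:ℝ) * Real.log (ν k) + C := by
      rw [hnt] at h12
      have ha1 : Real.log (S T) ≤ |Real.log (S T)| := le_abs_self _
      have ha2 : -((T:ℝ) * Real.log (ν k)) ≤ (T:ℝ) * |Real.log (ν k)| := by
        rw [← mul_neg]
        exact mul_le_mul_of_nonneg_left (neg_le_abs _) (Nat.cast_nonneg T)
      have hexp : ((t:ℝ) - (T:ℝ)) * Real.log (ν k) =
          (t:ℝ) * Real.log (ν k) - (T:ℝ) * Real.log (ν k) := by ring
      rw [hexp] at h12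
      rw [hCdef]
      linarith
    have h14 : Real.log (S t) / t ≤ Real.log (ν k) + C / t := by
      rw [div_le_iff₀ htR]
      have : (Real.log (ν k) + C / t) * t = (t:ℝ) * Real.log (ν k) + C := by
        field_simp
      rw [this]; exact h13
    linarith
  rw [Real.dist_eq]
  have heq : -Real.log (S t) / t - -Real.log lam = -(Real.log (S t) / t - Real.log lam) := by
    ring
  rw [heq, abs_neg, abs_of_nonneg (by linarith)]
  linarith
end

section
/- Let 0 < q < 1, a = 1/ln(1/q), b ∈ ℝ, β = (1-q)q^b, and α > 0. Define S(t) = α·t^{-β} for real t ≥ 1 and x_T(t) = a ln t + b. Then as t → ∞, S(t-1) - S(t) - q^{x_T(t)}(1-q)·S(t - x_T(t) - 1) = O(t^{-β-1}·(ln t)/t). -/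
open Filter Asymptotics Real


lemma key17 (p : ℝ) (hp : 0 < p) {x y : ℝ} (hx : 0 < x) (hxy : x ≤ y) :
    p * y ^ (-p-1) * (y - x) ≤ x ^ (-p) - y ^ (-p) ∧
    x ^ (-p) - y ^ (-p) ≤ p * x ^ (-p-1) * (y - x) := by
  rcases eq_or_lt_of_le hxy with rfl | hlt
  · simp
  have hy : 0 < y := hx.trans hlt
  obtain ⟨c, hc, hceq⟩ := exists_hasDerivAt_eq_slope (fun s => s ^ (-p))
    (fun s => (-p) * s ^ (-p-1)) hlt
    (fun s hs => (Real.continuousAt_rpow_const s (-p)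
      (Or.inl (hx.trans_le hs.1).ne')).continuousWithinAt)
    (fun s hs => Real.hasDerivAt_rpow_const (Or.inl (hx.trans hs.1).ne'))
  have hc0 : 0 < c := hx.trans hc.1
  rw [eq_div_iff (sub_ne_zero.mpr hlt.ne')] at hceq
  have h1 : x ^ (-p) - y ^ (-p) = p * c ^ (-p-1) * (y - x) := by
    linear_combination hceq
  have hcx : c ^ (-p-1) ≤ x ^ (-p-1) :=
    Real.rpow_le_rpow_of_nonpos hx hc.1.le (by linarith)
  have hyc : y ^ (-p-1) ≤ c ^ (-p-1) :=
    Real.rpow_le_rpow_of_nonpos hc0 hc.2.le (by linarith)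
  constructor
  · rw [h1]; gcongr <;> linarith
  · rw [h1]; gcongr <;> linarith

lemma core17 (β : ℝ) (hβ : 0 < β) (t w : ℝ) (ht : 2 ≤ t) (hw0 : 0 ≤ w) (hw : w ≤ t/2) :
    |((t-1) ^ (-β) - t ^ (-β)) - (β/t) * (t-w) ^ (-β)| ≤
      β*(β+1)*2^(β+2) * t^(-β-2) + β*β*2^(β+1) * (t^(-β-1) * w / t) := by
  have ht0 : (0:ℝ) < t := by linarith
  have htm : (0:ℝ) < t - 1 := by linarith
  have htw : (0:ℝ) < t - w := by linarith
  have htw2 : t/2 ≤ t - w := by linarith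
  have htm2 : t/2 ≤ t - 1 := by linarith
  -- MVT bounds
  have h1 := key17 β hβ htm (by linarith : t - 1 ≤ t)
  rw [show t - (t-1) = 1 by ring, mul_one, mul_one] at h1
  have h2 := (key17 (β+1) (by linarith) htm (by linarith : t - 1 ≤ t)).2
  rw [show t - (t-1) = 1 by ring, mul_one, show -(β+1) = -β-1 by ring,
    show -β-1-1 = -β-2 by ring] at h2
  have h3 := (key17 β hβ htw (by linarith : t - w ≤ t)).2
  rw [show t - (t-w) = w by ring] at h3
  -- halving bounds
  have e1 : ((2:ℝ))⁻¹ ^ (-β-2) = (2:ℝ)^(β+2) := by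
    rw [Real.inv_rpow (by norm_num), show (-β-2) = -(β+2) by ring,
      Real.rpow_neg (by norm_num), inv_inv]
  have e1' : ((2:ℝ))⁻¹ ^ (-β-1) = (2:ℝ)^(β+1) := by
    rw [Real.inv_rpow (by norm_num), show (-β-1) = -(β+1) by ring,
      Real.rpow_neg (by norm_num), inv_inv]
  have e2 : (t/2) ^ (-β-2) = t^(-β-2) * 2^(β+2) := by
    rw [div_eq_mul_inv, Real.mul_rpow ht0.le (by norm_num), e1]
  have e2' : (t/2) ^ (-β-1) = t^(-β-1) * 2^(β+1) := by
    rw [div_eq_mul_inv, Real.mul_rpow ht0.le (by norm_num), e1']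
  have hhalf1 : (t-1) ^ (-β-2) ≤ t^(-β-2) * 2^(β+2) := by
    rw [← e2]
    exact Real.rpow_le_rpow_of_nonpos (by linarith) htm2 (by linarith)
  have hhalf2 : (t-w) ^ (-β-1) ≤ t^(-β-1) * 2^(β+1) := by
    rw [← e2']
    exact Real.rpow_le_rpow_of_nonpos (by linarith) htw2 (by linarith)
  have hts : t ^ (-β-1) = t ^ (-β) / t := by
    rw [show -β-1 = -β + (-1) by ring, Real.rpow_add ht0, Real.rpow_neg_one, div_eq_mul_inv]
  -- A bounds
  have hA0 : 0 ≤ ((t-1) ^ (-β) - t ^ (-β)) - β * t^(-β-1) := by linarith [h1.1]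
  have hA : ((t-1) ^ (-β) - t ^ (-β)) - β * t^(-β-1) ≤ β*(β+1)*2^(β+2) * t^(-β-2) := by
    have s1 : ((t-1) ^ (-β) - t ^ (-β)) - β * t^(-β-1) ≤ β * ((t-1)^(-β-1) - t^(-β-1)) := by
      have h12 := h1.2
      ring_nf
      ring_nf at h12
      linarith
    have s2 := mul_le_mul_of_nonneg_left h2 hβ.le
    have s3 := mul_le_mul_of_nonneg_left hhalf1 (by positivity : (0:ℝ) ≤ β*(β+1))
    linarith
  -- B bounds
  have hB0 : 0 ≤ (t-w) ^ (-β) - t ^ (-β) := by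
    have hl := (key17 β hβ htw (by linarith : t - w ≤ t)).1
    rw [show t - (t-w) = w by ring] at hl
    have : 0 ≤ β * t ^ (-β-1) * w := by positivity
    linarith
  have hB : (β/t) * ((t-w) ^ (-β) - t ^ (-β)) ≤ β*β*2^(β+1) * (t^(-β-1) * w / t) := by
    have step : (t-w) ^ (-β) - t ^ (-β) ≤ β * (t^(-β-1) * 2^(β+1)) * w := by
      have := mul_le_mul_of_nonneg_right (mul_le_mul_of_nonneg_left hhalf2 hβ.le) hw0
      linarith
    have := mul_le_mul_of_nonneg_left step (div_nonneg hβ.le ht0.le)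
    calc (β/t) * ((t-w) ^ (-β) - t ^ (-β)) ≤ (β/t) * (β * (t^(-β-1) * 2^(β+1)) * w) := this
      _ = β*β*2^(β+1) * (t^(-β-1) * w / t) := by ring
  have hBx0 : 0 ≤ (β/t) * ((t-w) ^ (-β) - t ^ (-β)) :=
    mul_nonneg (div_nonneg hβ.le ht0.le) hB0
  have heq : ((t-1) ^ (-β) - t ^ (-β)) - (β/t) * (t-w) ^ (-β) =
      (((t-1) ^ (-β) - t ^ (-β)) - β * t^(-β-1)) - (β/t) * ((t-w) ^ (-β) - t ^ (-β)) := by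
    rw [hts]; ring
  rw [heq, abs_le]
  constructor <;> linarith

theorem stmt17 (q b α : ℝ) (hq0 : 0 < q) (hq1 : q < 1) (hα : 0 < α)
    (a β : ℝ) (ha : a = 1 / Real.log (1 / q)) (hβ : β = (1 - q) * q ^ b)
    (S xT : ℝ → ℝ)
    (hS : ∀ t : ℝ, 1 ≤ t → S t = α * t ^ (-β))
    (hxT : ∀ t : ℝ, xT t = a * Real.log t + b) :
    (fun t : ℝ => S (t - 1) - S t - q ^ xT t * (1 - q) * S (t - xT t - 1))
      =O[atTop] fun t : ℝ => t ^ (-β - 1) * (Real.log t / t) := by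
  have hlq : Real.log q < 0 := Real.log_neg hq0 hq1
  have ha0 : 0 < a := by
    rw [ha, one_div]
    have : 0 < Real.log (1/q) := Real.log_pos (by rw [lt_div_iff₀ hq0]; linarith)
    rw [← one_div]
    positivity
  have hβ0 : 0 < β := by
    rw [hβ]; exact mul_pos (by linarith) (Real.rpow_pos_of_pos hq0 b)
  have haq : a * Real.log q = -1 := by
    rw [ha, show (1:ℝ)/q = q⁻¹ from one_div q, Real.log_inv]
    field_simp
    rw [div_self hlq.ne]
  rw [Asymptotics.isBigO_iff]
  refine ⟨α * (β*(β+1)*2^(β+2) + β*β*2^(β+1) * (a + |b| + 1)), ?_⟩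
  have hlogtop : Tendsto (fun t : ℝ => a * Real.log t) atTop atTop :=
    Real.tendsto_log_atTop.const_mul_atTop ha0
  filter_upwards [eventually_ge_atTop (3:ℝ), eventually_ge_atTop (4*(|b|+1)),
    (isLittleO_iff.mp (Real.isLittleO_log_id_atTop.const_mul_left a))
      (by norm_num : (0:ℝ) < 1/4),
    hlogtop.eventually_ge_atTop (-(b+1))] with t ht3 hb4 hlsmall hwge
  have ht0 : (0:ℝ) < t := by linarith
  have hlt : 1 ≤ Real.log t := by
    rw [Real.le_log_iff_exp_le ht0]
    have := Real.exp_one_lt_d9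
    linarith
  simp only [id_eq] at hlsmall
  rw [Real.norm_eq_abs, Real.norm_eq_abs, abs_of_pos ht0] at hlsmall
  have hla : a * Real.log t ≤ t/4 := by
    have := le_abs_self (a * Real.log t); linarith
  have hw0 : 0 ≤ a * Real.log t + b + 1 := by linarith
  have hw2 : a * Real.log t + b + 1 ≤ t/2 := by
    have hb' : b + 1 ≤ |b| + 1 := by have := le_abs_self b; linarith
    linarith
  have htw1 : 1 ≤ t - xT t - 1 := by rw [hxT]; linarith
  rw [hS (t-1) (by linarith), hS t (by linarith), hS _ htw1, hxT]
  have hqa : q ^ (a * Real.log t) = t⁻¹ := by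
    rw [Real.rpow_def_of_pos hq0,
      show Real.log q * (a * Real.log t) = (a * Real.log q) * Real.log t by ring, haq,
      neg_one_mul, Real.exp_neg, Real.exp_log ht0]
  have hqx : q ^ (a * Real.log t + b) * (1 - q) = β / t := by
    rw [Real.rpow_add hq0, hqa, hβ]; ring
  rw [hqx]
  have harg : t - (a * Real.log t + b) - 1 = t - (a * Real.log t + b + 1) := by ring
  rw [harg]
  have hcore := core17 β hβ0 t (a * Real.log t + b + 1) (by linarith) hw0 hw2
  have hRpos : 0 < t ^ (-β-1) * (Real.log t / t) := by
    have := Real.rpow_pos_of_pos ht0 (-β-1)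
    have hl0 : 0 < Real.log t := by linarith
    positivity
  rw [Real.norm_eq_abs, Real.norm_eq_abs, abs_of_pos hRpos]
  have hLabs : |α * (t-1) ^ (-β) - α * t ^ (-β) - β / t * (α * (t - (a * Real.log t + b + 1)) ^ (-β))|
      = α * |((t-1) ^ (-β) - t ^ (-β)) - (β/t) * (t - (a * Real.log t + b + 1)) ^ (-β)| := by
    have e : α * (t-1) ^ (-β) - α * t ^ (-β) - β / t * (α * (t - (a * Real.log t + b + 1)) ^ (-β))
        = α * (((t-1) ^ (-β) - t ^ (-β)) - (β/t) * (t - (a * Real.log t + b + 1)) ^ (-β)) := by ring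
    rw [e, abs_mul, abs_of_pos hα]
  rw [hLabs]
  -- remaining arithmetic
  have hK1 : (0:ℝ) ≤ β*(β+1)*2^(β+2) := by positivity
  have hK2 : (0:ℝ) ≤ β*β*2^(β+1) := by positivity
  have hx1 : t^(-β-2) ≤ t ^ (-β-1) * (Real.log t / t) := by
    have e : t^(-β-2) = t^(-β-1) * (1/t) := by
      rw [show -β-2 = -β-1 + (-1) by ring, Real.rpow_add ht0, Real.rpow_neg_one, one_div]
    rw [e]
    have hp : 0 < t ^ (-β-1) := Real.rpow_pos_of_pos ht0 _
    have : (1:ℝ)/t ≤ Real.log t / t := by gcongr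
    nlinarith
  have hx2 : t^(-β-1) * (a * Real.log t + b + 1) / t ≤ (a + |b| + 1) * (t ^ (-β-1) * (Real.log t / t)) := by
    have hWle : a * Real.log t + b + 1 ≤ (a + |b| + 1) * Real.log t := by
      have hb' : b + 1 ≤ |b| + 1 := by have := le_abs_self b; linarith
      have : |b| + 1 ≤ (|b| + 1) * Real.log t := le_mul_of_one_le_right (by positivity) hlt
      nlinarith
    have hp : 0 ≤ t ^ (-β-1) / t := div_nonneg (Real.rpow_pos_of_pos ht0 _).le ht0.le
    have := mul_le_mul_of_nonneg_left hWle hp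
    calc t^(-β-1) * (a * Real.log t + b + 1) / t
        = (t^(-β-1)/t) * (a * Real.log t + b + 1) := by ring
      _ ≤ (t^(-β-1)/t) * ((a + |b| + 1) * Real.log t) := this
      _ = (a + |b| + 1) * (t ^ (-β-1) * (Real.log t / t)) := by ring
  calc α * |((t-1) ^ (-β) - t ^ (-β)) - (β/t) * (t - (a * Real.log t + b + 1)) ^ (-β)|
      ≤ α * (β*(β+1)*2^(β+2) * t^(-β-2) + β*β*2^(β+1) * (t^(-β-1) * (a * Real.log t + b + 1) / t)) :=
        mul_le_mul_of_nonneg_left hcore hα.le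
    _ ≤ α * (β*(β+1)*2^(β+2) * (t ^ (-β-1) * (Real.log t / t)) + β*β*2^(β+1) * ((a + |b| + 1) * (t ^ (-β-1) * (Real.log t / t)))) := by
        have c1 := mul_le_mul_of_nonneg_left hx1 hK1
        have c2 := mul_le_mul_of_nonneg_left hx2 hK2
        have : β*(β+1)*2^(β+2) * t^(-β-2) + β*β*2^(β+1) * (t^(-β-1) * (a * Real.log t + b + 1) / t)
            ≤ β*(β+1)*2^(β+2) * (t ^ (-β-1) * (Real.log t / t)) + β*β*2^(β+1) * ((a + |b| + 1) * (t ^ (-β-1) * (Real.log t / t))) := by linarith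
        exact mul_le_mul_of_nonneg_left this hα.le
    _ = α * (β*(β+1)*2^(β+2) + β*β*2^(β+1) * (a + |b| + 1)) * (t ^ (-β - 1) * (Real.log t / t)) := by
        ring
end

section
/- Let 0 < q < 1 and x_T(t) = a ln t + b with a < 1/ln(1/q) (trap moving slower than the critical logarithmic rate). If S : (real t ≥ T₀) → ℝ is positive, non-increasing, and satisfies S(t) ≤ S(t-1) - q^{x_T(t)}(1-q)·S(t - x_T(t) - 1) for all large t, then for every polynomial rate β > 0, S(t) = o(t^{-β}) as t → ∞; i.e., S decays faster than any inverse power of t. -/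
open Filter Asymptotics Real Set

set_option maxHeartbeats 1000000 in
theorem stmt19 (q a b T₀ : ℝ) (hq0 : 0 < q) (hq1 : q < 1)
    (ha : a < 1 / Real.log (1 / q))
    (xT : ℝ → ℝ) (hxT : ∀ t : ℝ, xT t = a * Real.log t + b)
    (S : ℝ → ℝ)
    (hpos : ∀ t : ℝ, T₀ ≤ t → 0 < S t)
    (hanti : AntitoneOn S (Ici T₀))
    (hrec : ∀ᶠ t : ℝ in atTop,
      S t ≤ S (t - 1) - q ^ xT t * (1 - q) * S (t - xT t - 1)) :
    ∀ β : ℝ, 0 < β → (fun t : ℝ => S t) =o[atTop] fun t : ℝ => t ^ (-β) := by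
  intro β hβ
  have hq1' : (1:ℝ) < 1 / q := (one_lt_one_div hq0 hq1)
  set L : ℝ := Real.log (1 / q) with hLdef
  have hL : 0 < L := Real.log_pos hq1'
  have hlogq : Real.log q = -L := by
    rw [hLdef, one_div, Real.log_inv]; ring
  set γ : ℝ := a * L with hγdef
  have hγ1 : γ < 1 := (lt_div_iff₀ hL).mp ha
  set γ' : ℝ := max γ 0 with hγ'def
  have hγ'0 : 0 ≤ γ' := le_max_right _ _
  have hγ'1 : γ' < 1 := max_lt hγ1 one_pos
  set η : ℝ := 1 - γ' with hηdef
  have hη : 0 < η := by rw [hηdef]; linarith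
  set c : ℝ := (1 - q) * q ^ b with hcdef
  have hc : 0 < c := mul_pos (by linarith) (Real.rpow_pos_of_pos hq0 b)
  -- coefficient lower bound
  have hcoef : ∀ t : ℝ, 1 ≤ t → c * t ^ (-γ') ≤ q ^ xT t * (1 - q) := by
    intro t ht
    have ht0 : 0 < t := lt_of_lt_of_le one_pos ht
    have h1b : q ^ (a * Real.log t) = t ^ (-γ) := by
      rw [Real.rpow_def_of_pos hq0, Real.rpow_def_of_pos ht0, hlogq, hγdef]
      congr 1
      ring
    have h1 : q ^ xT t = q ^ b * t ^ (-γ) := by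
      rw [hxT t, Real.rpow_add hq0, h1b]; ring
    have h2 : t ^ (-γ') ≤ t ^ (-γ) :=
      Real.rpow_le_rpow_of_exponent_le ht (neg_le_neg (le_max_left _ _))
    calc c * t ^ (-γ') = (1 - q) * (q ^ b * t ^ (-γ')) := by rw [hcdef]; ring
      _ ≤ (1 - q) * (q ^ b * t ^ (-γ)) := by
          apply mul_le_mul_of_nonneg_left _ (by linarith)
          exact mul_le_mul_of_nonneg_left h2 (Real.rpow_pos_of_pos hq0 b).le
      _ = q ^ xT t * (1 - q) := by rw [h1]; ring
  -- eventual facts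
  have hlog : (fun t : ℝ => a * Real.log t) =o[atTop] (fun t : ℝ => t) :=
    (Real.isLittleO_log_id_atTop).const_mul_left a
  have hlogev : ∀ᶠ t : ℝ in atTop, |a * Real.log t| ≤ (1/2) * t := by
    have := (isLittleO_iff.mp hlog) (by norm_num : (0:ℝ) < 1/2)
    filter_upwards [this, eventually_ge_atTop (0:ℝ)] with t h1 h2
    calc |a * Real.log t| = ‖a * Real.log t‖ := (Real.norm_eq_abs _).symm
      _ ≤ 1/2 * ‖t‖ := h1
      _ = 1/2 * t := by rw [Real.norm_eq_abs, abs_of_nonneg h2]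
  have hEv : ∀ᶠ t : ℝ in atTop,
      (S t ≤ S (t - 1) - q ^ xT t * (1 - q) * S (t - xT t - 1)) ∧
      1 ≤ t ∧ T₀ ≤ t - 1 ∧ T₀ ≤ t - xT t - 1 ∧ t - xT t - 1 ≤ 2 * t ∧ T₀ ≤ t := by
    filter_upwards [hrec, hlogev, eventually_ge_atTop (1:ℝ),
      eventually_ge_atTop (T₀ + 1), eventually_ge_atTop (2 * (T₀ + b + 1)),
      eventually_ge_atTop (-2 * (b + 1))] with t h1 h2 h3 h4 h5 h6
    have hal : -(1/2) * t ≤ a * Real.log t := by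
      have := neg_abs_le (a * Real.log t); linarith
    have har : a * Real.log t ≤ (1/2) * t := le_trans (le_abs_self _) h2
    refine ⟨h1, h3, by linarith, ?_, ?_, by linarith⟩
    · rw [hxT t]; linarith
    · rw [hxT t]; linarith
  obtain ⟨T₁, hT₁⟩ := eventually_atTop.mp hEv
  -- one-step inequality
  have hstep : ∀ t : ℝ, T₁ ≤ t → S t ≤ S (t - 1) - c * t ^ (-γ') * S (2 * t) := by
    intro t ht
    obtain ⟨h1, ht1, h2, h3, h4, h5⟩ := hT₁ t ht
    have h2t : T₀ ≤ 2 * t := by linarith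
    have hS2t : S (2 * t) ≤ S (t - xT t - 1) := hanti h3 h2t h4
    have hS2t0 : 0 < S (2 * t) := hpos _ h2t
    have : c * t ^ (-γ') * S (2 * t) ≤ q ^ xT t * (1 - q) * S (t - xT t - 1) := by
      apply mul_le_mul (hcoef t ht1) hS2t hS2t0.le
      have := Real.rpow_pos_of_pos hq0 (xT t)
      nlinarith
    linarith
  -- key doubling inequality
  set T₂ : ℝ := max (T₁ + 1) 2 with hT₂def
  have hkey : ∀ n : ℝ, T₂ ≤ n → n / 2 * (c * (4 * n) ^ (-γ') * S (5 * n)) ≤ S n := by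
    intro n hn
    have hn2 : (2:ℝ) ≤ n := le_trans (le_max_right _ _) hn
    have hnT₁ : T₁ + 1 ≤ n := le_trans (le_max_left _ _) hn
    have hn0 : 0 < n := by linarith
    have hnT₀ : T₀ ≤ n := (hT₁ n (by linarith)).2.2.2.2.2
    set m : ℕ := ⌊n⌋₊ with hmdef
    have hmn : (m:ℝ) ≤ n := Nat.floor_le hn0.le
    have hmn' : n / 2 ≤ (m:ℝ) := by
      have := Nat.sub_one_lt_floor n; rw [← hmdef] at this; linarith
    set D : ℝ := c * (4 * n) ^ (-γ') * S (5 * n) with hDdef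
    have hD0 : 0 ≤ D := by
      have h5 : 0 < S (5 * n) := hpos _ (by linarith)
      have h4 : 0 < (4 * n) ^ (-γ') := Real.rpow_pos_of_pos (by linarith) _
      rw [hDdef]; positivity
    have hterm : ∀ j ∈ Finset.range m, D ≤ S (n + j) - S (n + ((j + 1 : ℕ) : ℝ)) := by
      intro j hj
      have hj' : (j:ℝ) + 1 ≤ (m:ℝ) := by
        have := Finset.mem_range.mp hj
        exact_mod_cast Nat.succ_le_of_lt this
      have hj0 : (0:ℝ) ≤ (j:ℝ) := Nat.cast_nonneg j
      set t : ℝ := n + (j:ℝ) + 1 with htdef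
      have htT₁ : T₁ ≤ t := by rw [htdef]; linarith
      have hst := hstep t htT₁
      have ht1 : t - 1 = n + (j:ℝ) := by rw [htdef]; ring
      have htle : t ≤ 2 * n := by rw [htdef]; linarith
      have ht4 : t ≤ 4 * n := by linarith
      have ht0 : 0 < t := by rw [htdef]; linarith
      -- coefficient comparison
      have hcmp : (4 * n) ^ (-γ') ≤ t ^ (-γ') :=
        Real.rpow_le_rpow_of_nonpos ht0 ht4 (neg_nonpos.mpr hγ'0)
      -- S comparison
      have h2t5n : S (5 * n) ≤ S (2 * t) := by
        apply hanti _ _ (by linarith)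
        · exact mem_Ici.mpr (by linarith)
        · exact mem_Ici.mpr (by linarith)
      have hS5n : 0 < S (5 * n) := hpos _ (by linarith)
      have hDle : D ≤ c * t ^ (-γ') * S (2 * t) := by
        rw [hDdef]
        have hpos' : 0 ≤ c * t ^ (-γ') := by
          have := Real.rpow_pos_of_pos ht0 (-γ')
          positivity
        exact mul_le_mul (mul_le_mul_of_nonneg_left hcmp hc.le) h2t5n hS5n.le hpos' 
      have : S t ≤ S (t - 1) - D := by linarith
      rw [ht1] at this
      have hcast : n + ((j+1 : ℕ):ℝ) = t := by rw [htdef]; push_cast; ring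
      rw [hcast]
      linarith
    have htel : (m:ℝ) * D ≤ S n - S (n + m) := by
      have hsle := Finset.card_nsmul_le_sum (Finset.range m)
        (fun j : ℕ => S (n + j) - S (n + (j+1 : ℕ))) D hterm
      rw [Finset.sum_range_sub' (fun j : ℕ => S (n + j)) m,
        Finset.card_range, nsmul_eq_mul] at hsle
      simpa using hsle
    have hSnm : 0 < S (n + m) := hpos _ (by
      have : (0:ℝ) ≤ (m:ℝ) := Nat.cast_nonneg m
      linarith)
    nlinarith
  -- convert to clean form
  set c₂ : ℝ := c * 4 ^ (-γ') / 2 with hc₂def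
  have hc₂ : 0 < c₂ := by
    have := Real.rpow_pos_of_pos (by norm_num : (0:ℝ) < 4) (-γ')
    rw [hc₂def]; positivity
  have hkey2 : ∀ n : ℝ, T₂ ≤ n → c₂ * n ^ η * S (5 * n) ≤ S n := by
    intro n hn
    have hn2 : (2:ℝ) ≤ n := le_trans (le_max_right _ _) hn
    have hn0 : 0 < n := by linarith
    have h4n : (4 * n) ^ (-γ') = 4 ^ (-γ') * n ^ (-γ') :=
      Real.mul_rpow (by norm_num) hn0.le
    have hnn : n * n ^ (-γ') = n ^ η := by
      nth_rewrite 1 [← Real.rpow_one n]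
      rw [← Real.rpow_add hn0, hηdef]
      congr 1
    have h := hkey n hn
    rw [h4n] at h
    calc c₂ * n ^ η * S (5 * n) = n / 2 * (c * (4 ^ (-γ') * n ^ (-γ')) * S (5 * n)) := by
          rw [hc₂def, ← hnn]; ring
      _ ≤ S n := h
  -- setup geometric sequence
  have hT₀T₂ : T₀ ≤ T₂ := by
    have := (hT₁ T₂ (by rw [hT₂def]; exact le_trans (by linarith) (le_max_left _ _))).2.2.2.2.2
    exact this
  set N : ℝ := max T₂ 1 with hNdef
  have hN1 : (1:ℝ) ≤ N := le_max_right _ _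
  have hN0 : (0:ℝ) < N := by linarith
  have hNT₂ : T₂ ≤ N := le_max_left _ _
  have hNT₀ : T₀ ≤ N := le_trans hT₀T₂ hNT₂
  have hnk : ∀ k : ℕ, N ≤ (5:ℝ)^k * N := by
    intro k
    nlinarith [one_le_pow₀ (by norm_num : (1:ℝ) ≤ 5) (n := k)]
  have hiter : ∀ k : ℕ,
      c₂ * ((5:ℝ)^k * N) ^ η * S ((5:ℝ)^(k+1) * N) ≤ S ((5:ℝ)^k * N) := by
    intro k
    have h := hkey2 ((5:ℝ)^k * N) (le_trans hNT₂ (hnk k))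
    have h5 : 5 * ((5:ℝ)^k * N) = (5:ℝ)^(k+1) * N := by ring
    rw [h5] at h
    exact h
  set A : ℕ → ℝ := fun k => S ((5:ℝ)^k * N) * ((5:ℝ)^(k+1) * N) ^ β with hAdef
  have hApos : ∀ k, 0 < A k := by
    intro k
    have h1 : 0 < S ((5:ℝ)^k * N) := hpos _ (le_trans hNT₀ (hnk k))
    have h2 : 0 < ((5:ℝ)^(k+1) * N) ^ β :=
      Real.rpow_pos_of_pos (by positivity) _
    exact mul_pos h1 h2
  -- ratio bound eventually
  have htend : Tendsto (fun k : ℕ => c₂ * ((5:ℝ)^k * N) ^ η) atTop atTop := by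
    apply Tendsto.const_mul_atTop hc₂
    apply (tendsto_rpow_atTop hη).comp
    exact Tendsto.atTop_mul_const hN0 (tendsto_pow_atTop_atTop_of_one_lt (by norm_num : (1:ℝ) < 5))
  obtain ⟨k₀, hk₀⟩ := eventually_atTop.mp (htend.eventually_ge_atTop (2 * 5 ^ β))
  -- halving of A
  have hhalf : ∀ k, k₀ ≤ k → A (k+1) ≤ (1/2) * A k := by
    intro k hk
    have hP : 2 * 5 ^ β ≤ c₂ * ((5:ℝ)^k * N) ^ η := hk₀ k hk
    have hX : 0 < S ((5:ℝ)^(k+1) * N) := hpos _ (le_trans hNT₀ (hnk (k+1)))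
    have hY : 0 < ((5:ℝ)^(k+1) * N) ^ β := Real.rpow_pos_of_pos (by positivity) _
    have hIt := hiter k
    have h1 : (c₂ * ((5:ℝ)^k * N) ^ η) * (S ((5:ℝ)^(k+1) * N) * ((5:ℝ)^(k+1) * N) ^ β)
        ≤ A k := by
      have h := mul_le_mul_of_nonneg_right hIt hY.le
      calc (c₂ * ((5:ℝ)^k * N) ^ η) * (S ((5:ℝ)^(k+1) * N) * ((5:ℝ)^(k+1) * N) ^ β)
          = (c₂ * ((5:ℝ)^k * N) ^ η * S ((5:ℝ)^(k+1) * N)) * ((5:ℝ)^(k+1) * N) ^ β := by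
            ring
        _ ≤ S ((5:ℝ)^k * N) * ((5:ℝ)^(k+1) * N) ^ β := h
        _ = A k := rfl
    have h2 : A (k+1) = 5 ^ β * (S ((5:ℝ)^(k+1) * N) * ((5:ℝ)^(k+1) * N) ^ β) := by
      have h5 : ((5:ℝ)^(k+1+1) * N) = 5 * ((5:ℝ)^(k+1) * N) := by ring
      calc A (k+1) = S ((5:ℝ)^(k+1) * N) * ((5:ℝ)^(k+1+1) * N) ^ β := rfl
        _ = 5 ^ β * (S ((5:ℝ)^(k+1) * N) * ((5:ℝ)^(k+1) * N) ^ β) := by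
            rw [h5, Real.mul_rpow (by norm_num) (by positivity)]
            ring
    have hXY : 0 < S ((5:ℝ)^(k+1) * N) * ((5:ℝ)^(k+1) * N) ^ β := mul_pos hX hY
    rw [h2]
    have h3 := mul_le_mul_of_nonneg_right hP hXY.le
    linarith
  have hdecay : ∀ j : ℕ, A (k₀ + j) ≤ (1/2)^j * A k₀ := by
    intro j
    induction j with
    | zero => simpa only [pow_zero, one_mul, Nat.add_zero] using le_refl (A k₀)
    | succ j ih =>
      have h1 : A (k₀ + (j+1)) ≤ (1/2) * A (k₀ + j) :=
        hhalf (k₀ + j) (Nat.le_add_right _ _)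
      calc A (k₀ + (j+1)) ≤ (1/2) * A (k₀ + j) := h1
        _ ≤ (1/2) * ((1/2)^j * A k₀) := by
            apply mul_le_mul_of_nonneg_left ih (by norm_num)
        _ = (1/2)^(j+1) * A k₀ := by ring
  -- conclude littleO
  rw [isLittleO_iff]
  intro C hC
  have htend0 : Tendsto (fun j : ℕ => (1/2:ℝ)^j * A k₀) atTop (nhds 0) := by
    have := (tendsto_pow_atTop_nhds_zero_of_lt_one (by norm_num : (0:ℝ) ≤ 1/2)
      (by norm_num : (1/2:ℝ) < 1)).mul_const (A k₀)
    simpa only [zero_mul] using this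
  obtain ⟨j₀, hj₀⟩ := eventually_atTop.mp (htend0.eventually (gt_mem_nhds hC))
  have hAk : ∀ k, k₀ + j₀ ≤ k → A k ≤ C := by
    intro k hk
    have hkk : k = k₀ + (k - k₀) := by omega
    rw [hkk]
    exact le_of_lt (lt_of_le_of_lt (hdecay (k - k₀)) (hj₀ (k - k₀) (by omega)))
  filter_upwards [eventually_ge_atTop ((5:ℝ)^(k₀+j₀+1) * N),
    eventually_gt_atTop (0:ℝ)] with t ht ht0
  have htN : (5:ℝ)^(k₀+j₀+1) ≤ t / N := (le_div_iff₀ hN0).mpr ht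
  have htN0 : 0 < t / N := div_pos ht0 hN0
  set x : ℝ := Real.logb 5 (t / N) with hxdef
  have hx5 : (5:ℝ) ^ x = t / N := Real.rpow_logb (by norm_num) (by norm_num) htN0
  have hxge : ((k₀ + j₀ + 1 : ℕ) : ℝ) ≤ x := by
    rw [hxdef, Real.le_logb_iff_rpow_le (by norm_num) htN0, Real.rpow_natCast]
    exact_mod_cast htN
  set k : ℕ := ⌊x⌋₊ with hkdef
  have hk1 : k₀ + j₀ + 1 ≤ k := Nat.le_floor hxge
  have hx0 : 0 ≤ x := le_trans (by positivity) hxge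
  have hlow : (5:ℝ)^k * N ≤ t := by
    have h1 : (5:ℝ) ^ (k:ℝ) ≤ (5:ℝ) ^ x :=
      Real.rpow_le_rpow_of_exponent_le (by norm_num) (Nat.floor_le hx0)
    rw [hx5, Real.rpow_natCast] at h1
    calc (5:ℝ)^k * N ≤ (t/N) * N := mul_le_mul_of_nonneg_right h1 hN0.le
      _ = t := div_mul_cancel₀ t hN0.ne'
  have hhigh : t ≤ (5:ℝ)^(k+1) * N := by
    have h1 : (5:ℝ) ^ x ≤ (5:ℝ) ^ (((k+1:ℕ)):ℝ) := by
      apply Real.rpow_le_rpow_of_exponent_le (by norm_num)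
      push_cast
      exact (Nat.lt_floor_add_one x).le
    rw [hx5, Real.rpow_natCast] at h1
    calc t = (t/N) * N := (div_mul_cancel₀ t hN0.ne').symm
      _ ≤ (5:ℝ)^(k+1) * N := mul_le_mul_of_nonneg_right h1 hN0.le
  have hT₀k : T₀ ≤ (5:ℝ)^k * N := le_trans hNT₀ (hnk k)
  have hT₀t : T₀ ≤ t := le_trans hT₀k hlow
  have hSt : S t ≤ S ((5:ℝ)^k * N) :=
    hanti (mem_Ici.mpr hT₀k) (mem_Ici.mpr hT₀t) hlow
  have htβ : t ^ β ≤ ((5:ℝ)^(k+1) * N) ^ β := Real.rpow_le_rpow ht0.le hhigh hβ.le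
  have hStpos : 0 < S t := hpos t hT₀t
  have htβpos : 0 < t ^ β := Real.rpow_pos_of_pos ht0 β
  have hprod : S t * t ^ β ≤ A k := by
    rw [hAdef]; dsimp only
    exact mul_le_mul hSt htβ htβpos.le (hpos _ hT₀k).le
  have hAC : A k ≤ C := hAk k (by omega)
  have hfin : S t * t ^ β ≤ C := le_trans hprod hAC
  rw [Real.norm_eq_abs, Real.norm_eq_abs, abs_of_pos hStpos,
    abs_of_pos (Real.rpow_pos_of_pos ht0 (-β)), Real.rpow_neg ht0.le]
  calc S t = S t * t ^ β * (t ^ β)⁻¹ := by field_simp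
    _ ≤ C * (t ^ β)⁻¹ :=
      mul_le_mul_of_nonneg_right hfin (inv_nonneg.mpr htβpos.le)
end
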